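/- Let n ≥ 3, let A, a ∈ ℝ, and define F(x₁,…,xₙ) = ((x₁)² + … + (xₙ)² + A)/(x₁ + … + xₙ + a) on the set where x₁ + … + xₙ + a ≠ 0. Then F is irreducible on every nonempty connected open subset U of this set: for every permutation σ of {1,…,n} and every k with 2 ≤ k ≤ n−1, there exist no C² functions h of k variables and g of n−k+1 variables such that F(x₁,…,xₙ) = g(h(x_{σ(1)},…,x_{σ(k)}), x_{σ(k+1)},…,x_{σ(n)}) for all x ∈ U. -/

import Mathlib

lemma sum_update_update {n : ℕ} (f : Fin n → ℝ) {mm ii : Fin n} (hmi : mm ≠ ii) (v w : ℝ) :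
    ∑ l, Function.update (Function.update f mm v) ii w l
      = (∑ l, f l) - f mm - f ii + v + w := by
  rw [Finset.sum_update_of_mem (Finset.mem_univ ii)]
  rw [Finset.sum_update_of_mem (by simp [hmi] : mm ∈ Finset.univ \ {ii})]
  have h1 : ∑ l, f l = f ii + ∑ l ∈ Finset.univ \ {ii}, f l := by
    rw [← Finset.sum_update_of_mem (Finset.mem_univ ii), Function.update_eq_self]
  have h2 : ∑ l ∈ Finset.univ \ {ii}, f l
      = f mm + ∑ l ∈ (Finset.univ \ {ii}) \ {mm}, f l := by
    rw [← Finset.sum_update_of_mem (by simp [hmi] : mm ∈ Finset.univ \ {ii}),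
      Function.update_eq_self]
  linarith

/-- The `n`-quasigroup
`F(x) = ((x₁)² + … + (xₙ)² + A)/(x₁ + … + xₙ + a)` is irreducible on every
nonempty connected open subset of `{x : x₁ + … + xₙ + a ≠ 0}`: for every
permutation `σ` and every `k` with `2 ≤ k ≤ n−1` there is no decomposition
`F(x) = g(h(x_{σ(1)},…,x_{σ(k)}), x_{σ(k+1)},…,x_{σ(n)})` with C² `g`, `h`. -/
theorem stmt_9 (n : ℕ) (hn : 3 ≤ n) (A a : ℝ)
    (F : (Fin n → ℝ) → ℝ)
    (hF : ∀ x, F x = ((∑ i, (x i) ^ 2) + A) / ((∑ i, x i) + a))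
    (U : Set (Fin n → ℝ)) (hUopen : IsOpen U) (hUconn : IsConnected U)
    (hden : ∀ x ∈ U, (∑ i, x i) + a ≠ 0) :
    ∀ (σ : Equiv.Perm (Fin n)) (k : ℕ) (hk2 : 2 ≤ k) (hkn : k ≤ n - 1),
      ¬ ∃ (h : (Fin k → ℝ) → ℝ) (g : ℝ × (Fin (n - k) → ℝ) → ℝ),
          ContDiff ℝ 2 h ∧ ContDiff ℝ 2 g ∧
          ∀ x ∈ U, F x = g (h (fun i => x (σ (Fin.castLE (by omega) i))),
            fun j => x (σ ⟨k + j.1, by have := j.2; omega⟩)) := by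
  intro σ k hk2 hkn
  rintro ⟨h, g, hh, hg, hdec⟩
  have hkn' : k ≤ n := by omega
  have hkltn : k < n := by omega
  have hnk : 0 < n - k := by omega
  have h0k : 0 < k := by omega
  have h1k : 1 < k := by omega
  set m : Fin n := σ ⟨k, hkltn⟩ with hm
  set i : Fin n := σ (Fin.castLE hkn' ⟨0, h0k⟩) with hi
  set j : Fin n := σ (Fin.castLE hkn' ⟨1, h1k⟩) with hj
  have hij : i ≠ j := by
    rw [hi, hj]; intro e
    have := σ.injective e
    simp [Fin.ext_iff] at this
  have him : i ≠ m := by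
    rw [hi, hm]; intro e
    have := σ.injective e
    simp [Fin.ext_iff] at this
    omega
  have hjm : j ≠ m := by
    rw [hj, hm]; intro e
    have := σ.injective e
    simp [Fin.ext_iff] at this
    omega
  -- KEY: on U, the i-th and j-th coordinates agree
  have key : ∀ p ∈ U, p i = p j := by
    intro p hp
    have hd0 : (∑ l, p l) + a ≠ 0 := hden p hp
    set y0 : Fin k → ℝ := fun i' => p (σ (Fin.castLE hkn' i')) with hy0
    set z0 : Fin (n - k) → ℝ := fun j' => p (σ ⟨k + j'.1, by have := j'.2; omega⟩) with hz0
    set Gv : ℝ → ℝ := fun u =>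
      fderiv ℝ g (h y0, Function.update z0 ⟨0, hnk⟩ (p m + u)) (1, 0) with hGv
    set hsl : Fin k → ℝ := fun c => fderiv ℝ h y0 (Pi.single c 1) with hhsl
    set d : ℝ := (∑ l, p l) + a with hdd
    set C : ℝ := (∑ l, (p l) ^ 2) + A with hC
    -- the main derivative identity
    have main : ∀ (c : Fin k) (u : ℝ) (θ : ℝ), 0 < θ →
        (∀ s : ℝ, |s| < θ →
          Function.update (Function.update p m (p m + u)) (σ (Fin.castLE hkn' c))
            (p (σ (Fin.castLE hkn' c)) + s) ∈ U) →
        2 * p (σ (Fin.castLE hkn' c)) * (d + u) - (C + 2 * p m * u + u ^ 2)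
          = Gv u * hsl c * (d + u) ^ 2 := by
      intro c u θ hθ hmem
      have hicm : σ (Fin.castLE hkn' c) ≠ m := by
        rw [hm]; intro e
        have h9 := σ.injective e
        have hc2 := c.2
        simp [Fin.ext_iff] at h9
        omega
      set ic : Fin n := σ (Fin.castLE hkn' c) with hic
      set xf : ℝ → Fin n → ℝ :=
        fun s => Function.update (Function.update p m (p m + u)) ic (p ic + s) with hxf
      have hS : ∀ s, (∑ l, xf s l) + a = d + u + s := by
        intro s
        simp only [hxf]
        rw [sum_update_update p (Ne.symm hicm)]
        rw [hdd]; ring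
      have hsq : ∀ s (l : Fin n), (xf s l) ^ 2
          = Function.update (Function.update (fun l => (p l) ^ 2) m ((p m + u) ^ 2)) ic
              ((p ic + s) ^ 2) l := by
        intro s l
        simp only [hxf]
        rcases eq_or_ne l ic with rfl | hl1
        · rw [Function.update_self, Function.update_self]
        · rw [Function.update_of_ne hl1, Function.update_of_ne hl1]
          rcases eq_or_ne l m with rfl | hl2
          · rw [Function.update_self, Function.update_self]
          · rw [Function.update_of_ne hl2, Function.update_of_ne hl2]
      have hQ : ∀ s, (∑ l, (xf s l) ^ 2) + A
          = C - p m ^ 2 - p ic ^ 2 + (p m + u) ^ 2 + (p ic + s) ^ 2 := by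
        intro s
        rw [Finset.sum_congr rfl (fun l _ => hsq s l)]
        rw [sum_update_update (fun l => (p l) ^ 2) (Ne.symm hicm)]
        rw [hC]; ring
      have hx0 : xf 0 ∈ U := hmem 0 (by simpa using hθ)
      have hdne : d + u ≠ 0 := by
        have h5 := hden (xf 0) hx0
        rw [hS 0] at h5
        simpa using h5
      -- LHS explicit derivative
      have hb : HasDerivAt (fun s : ℝ => p ic + s) 1 0 := by
        simpa using (hasDerivAt_id (0 : ℝ)).const_add (p ic)
      have hnum : HasDerivAt
          (fun s : ℝ => C - p m ^ 2 - p ic ^ 2 + (p m + u) ^ 2 + (p ic + s) ^ 2)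
          (2 * p ic) 0 := by
        have h9 := (hb.pow 2).const_add (C - p m ^ 2 - p ic ^ 2 + (p m + u) ^ 2)
        simpa using h9
      have hdenf : HasDerivAt (fun s : ℝ => d + u + s) 1 0 := by
        simpa using (hasDerivAt_id (0 : ℝ)).const_add (d + u)
      have hdnz : d + u + 0 ≠ 0 := by simpa using hdne
      have hdiv := hnum.div hdenf hdnz
      have hLfun : (fun s : ℝ => F (xf s))
          = fun s : ℝ => (C - p m ^ 2 - p ic ^ 2 + (p m + u) ^ 2 + (p ic + s) ^ 2)
              / (d + u + s) := by
        funext s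
        rw [hF, hQ s, hS s]
      have hL : HasDerivAt (fun s : ℝ => F (xf s))
          ((2 * p ic * (d + u + 0)
            - (C - p m ^ 2 - p ic ^ 2 + (p m + u) ^ 2 + (p ic + 0) ^ 2) * 1)
            / (d + u + 0) ^ 2) 0 := by
        rw [hLfun]; exact hdiv
      -- RHS derivative via the decomposition
      have hy0c : y0 c = p ic := rfl
      have hupdate_line : ∀ s : ℝ,
          Function.update y0 c (p ic + s) = y0 + s • (Pi.single c 1 : Fin k → ℝ) := by
        intro s
        funext i'
        by_cases hcc : i' = c
        · subst hcc
          simp [hy0c]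
        · simp [Function.update_of_ne hcc, Pi.single_eq_of_ne hcc]
      have hlin : HasDerivAt (fun s : ℝ => y0 + s • (Pi.single c 1 : Fin k → ℝ))
          ((Pi.single c 1 : Fin k → ℝ)) 0 := by
        simpa using ((hasDerivAt_id (0 : ℝ)).smul_const ((Pi.single c 1 : Fin k → ℝ))).const_add y0
      have hy00 : y0 + (0 : ℝ) • (Pi.single c 1 : Fin k → ℝ) = y0 := by simp
      have hH : HasDerivAt (fun s : ℝ => h (y0 + s • (Pi.single c 1 : Fin k → ℝ))) (hsl c) 0 := by
        have hdh : HasFDerivAt h (fderiv ℝ h y0) (y0 + (0 : ℝ) • (Pi.single c 1 : Fin k → ℝ)) := by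
          rw [hy00]; exact (hh.differentiable (by norm_num) y0).hasFDerivAt
        have h9 := hdh.comp_hasDerivAt 0 hlin
        exact h9
      have hcurve : HasDerivAt
          (fun w : ℝ => (w, Function.update z0 ⟨0, hnk⟩ (p m + u)))
          ((1 : ℝ), (0 : Fin (n - k) → ℝ)) (h y0) :=
        (hasDerivAt_id _).prodMk (hasDerivAt_const _ _)
      have hGout : HasDerivAt
          (fun w : ℝ => g (w, Function.update z0 ⟨0, hnk⟩ (p m + u))) (Gv u) (h y0) := by
        have hgd : HasFDerivAt g
            (fderiv ℝ g (h y0, Function.update z0 ⟨0, hnk⟩ (p m + u)))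
            (h y0, Function.update z0 ⟨0, hnk⟩ (p m + u)) :=
          (hg.differentiable (by norm_num) _).hasFDerivAt
        have h9 := hgd.comp_hasDerivAt (h y0) hcurve
        exact h9
      have hR0 : HasDerivAt (fun s : ℝ => g (h (y0 + s • (Pi.single c 1 : Fin k → ℝ)),
          Function.update z0 ⟨0, hnk⟩ (p m + u))) (Gv u * hsl c) 0 := by
        have hpt : (fun s : ℝ => h (y0 + s • (Pi.single c 1 : Fin k → ℝ))) 0 = h y0 := by
          simp
        have hGout' : HasDerivAt
            (fun w : ℝ => g (w, Function.update z0 ⟨0, hnk⟩ (p m + u))) (Gv u)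
            ((fun s : ℝ => h (y0 + s • (Pi.single c 1 : Fin k → ℝ))) 0) := by
          rw [hpt]; exact hGout
        have h9 := hGout'.comp 0 hH
        exact h9
      -- identify arguments
      have hYarg : ∀ s : ℝ,
          (fun i' : Fin k => xf s (σ (Fin.castLE hkn' i')))
            = Function.update y0 c (p ic + s) := by
        intro s
        funext i'
        have hc2 := c.2
        have hi2 := i'.2
        simp only [hxf, Function.update_apply, hic, hm, hy0, Equiv.apply_eq_iff_eq,
          Fin.ext_iff, Fin.coe_castLE]
        split_ifs with h1 h2 h3 <;> first | rfl | omega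
      have hZarg : ∀ s : ℝ,
          (fun j' : Fin (n - k) => xf s (σ ⟨k + j'.1, by have := j'.2; omega⟩))
            = Function.update z0 ⟨0, hnk⟩ (p m + u) := by
        intro s
        funext j'
        have hc2 := c.2
        have hj2 := j'.2
        simp only [hxf, Function.update_apply, hic, hm, hz0, Equiv.apply_eq_iff_eq,
          Fin.ext_iff, Fin.coe_castLE]
        split_ifs with h1 h2 h3 <;> first | rfl | omega
      have heq : (fun s : ℝ => g (h (y0 + s • (Pi.single c 1 : Fin k → ℝ)),
            Function.update z0 ⟨0, hnk⟩ (p m + u)))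
          =ᶠ[nhds (0 : ℝ)] fun s : ℝ => F (xf s) := by
        filter_upwards [Metric.ball_mem_nhds (0 : ℝ) hθ] with s hs
        have hsθ : |s| < θ := by simpa [Real.dist_eq] using hs
        have hxs : xf s ∈ U := hmem s hsθ
        rw [hdec (xf s) hxs, ← hupdate_line s, ← hYarg s, ← hZarg s]
      have hR : HasDerivAt (fun s : ℝ => F (xf s)) (Gv u * hsl c) 0 :=
        hR0.congr_of_eventuallyEq heq.symm
      have hval := hR.unique hL
      rw [eq_div_iff (pow_ne_zero 2 (by simpa using hdne))] at hval
      linear_combination -hval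
    -- membership radii from openness
    have mem_lemma : ∀ l0 : Fin n, ∃ θ > 0, ∀ u s : ℝ, |u| < θ → |s| < θ →
        Function.update (Function.update p m (p m + u)) l0 (p l0 + s) ∈ U := by
      intro l0
      have hcont2 : Continuous (fun q : ℝ × ℝ =>
          Function.update (Function.update p m (p m + q.1)) l0 (p l0 + q.2)) := by
        apply Continuous.update
        · apply Continuous.update
          · exact continuous_const
          · exact continuous_const.add continuous_fst
        · exact continuous_const.add continuous_snd
      have hopen2 := hUopen.preimage hcont2
      have h00 : ((0 : ℝ), (0 : ℝ)) ∈ (fun q : ℝ × ℝ =>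
          Function.update (Function.update p m (p m + q.1)) l0 (p l0 + q.2)) ⁻¹' U := by
        simpa [Function.update_eq_self] using hp
      obtain ⟨θ, hθ, hball2⟩ := Metric.isOpen_iff.mp hopen2 (0, 0) h00
      refine ⟨θ, hθ, fun u s hu hs => ?_⟩
      have hmemb : ((u, s) : ℝ × ℝ) ∈ (fun q : ℝ × ℝ =>
          Function.update (Function.update p m (p m + q.1)) l0 (p l0 + q.2)) ⁻¹' U := by
        apply hball2
        rw [Metric.mem_ball, Prod.dist_eq]
        simp only [Real.dist_eq, sub_zero]
        exact max_lt hu hs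
      exact hmemb
    obtain ⟨θ0, hθ0, hmem0⟩ := mem_lemma i
    obtain ⟨θ1, hθ1, hmem1⟩ := mem_lemma j
    set u1 : ℝ := min θ0 θ1 / 2 with hu1
    have hminpos : 0 < min θ0 θ1 := lt_min hθ0 hθ1
    have hu1pos : 0 < u1 := by positivity
    have hu1lt : u1 < min θ0 θ1 := by rw [hu1]; linarith
    have habs0 : ∀ v : ℝ, |v| ≤ u1 → |v| < θ0 :=
      fun v hv => lt_of_le_of_lt hv (lt_of_lt_of_le hu1lt (min_le_left _ _))
    have habs1 : ∀ v : ℝ, |v| ≤ u1 → |v| < θ1 :=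
      fun v hv => lt_of_le_of_lt hv (lt_of_lt_of_le hu1lt (min_le_right _ _))
    have hau1 : |u1| ≤ u1 := le_of_eq (abs_of_pos hu1pos)
    have hau1' : |(-u1)| ≤ u1 := by rw [abs_neg]; exact hau1
    have hau0 : |(0 : ℝ)| ≤ u1 := by simp; positivity
    have hsb0 : ∀ s : ℝ, |s| < min θ0 θ1 → |s| < θ0 :=
      fun s hs => lt_of_lt_of_le hs (min_le_left _ _)
    have hsb1 : ∀ s : ℝ, |s| < min θ0 θ1 → |s| < θ1 :=
      fun s hs => lt_of_lt_of_le hs (min_le_right _ _)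
    have e1 := main ⟨0, h0k⟩ u1 (min θ0 θ1) hminpos
      (fun s hs => hmem0 u1 s (habs0 u1 hau1) (hsb0 s hs))
    have e2 := main ⟨1, h1k⟩ u1 (min θ0 θ1) hminpos
      (fun s hs => hmem1 u1 s (habs1 u1 hau1) (hsb1 s hs))
    have e3 := main ⟨0, h0k⟩ 0 (min θ0 θ1) hminpos
      (fun s hs => hmem0 0 s (habs0 0 hau0) (hsb0 s hs))
    have e4 := main ⟨1, h1k⟩ 0 (min θ0 θ1) hminpos
      (fun s hs => hmem1 0 s (habs1 0 hau0) (hsb1 s hs))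
    have e5 := main ⟨0, h0k⟩ (-u1) (min θ0 θ1) hminpos
      (fun s hs => hmem0 (-u1) s (habs0 (-u1) hau1') (hsb0 s hs))
    have e6 := main ⟨1, h1k⟩ (-u1) (min θ0 θ1) hminpos
      (fun s hs => hmem1 (-u1) s (habs1 (-u1) hau1') (hsb1 s hs))
    have cross1 :
        (2 * p (σ (Fin.castLE hkn' ⟨0, h0k⟩)) * (d + u1) - (C + 2 * p m * u1 + u1 ^ 2))
          * (2 * p (σ (Fin.castLE hkn' ⟨1, h1k⟩)) * (d + 0) - (C + 2 * p m * 0 + 0 ^ 2))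
        = (2 * p (σ (Fin.castLE hkn' ⟨1, h1k⟩)) * (d + u1) - (C + 2 * p m * u1 + u1 ^ 2))
          * (2 * p (σ (Fin.castLE hkn' ⟨0, h0k⟩)) * (d + 0) - (C + 2 * p m * 0 + 0 ^ 2)) := by
      rw [e1, e2, e3, e4]; ring
    have cross2 :
        (2 * p (σ (Fin.castLE hkn' ⟨0, h0k⟩)) * (d + -u1) - (C + 2 * p m * -u1 + (-u1) ^ 2))
          * (2 * p (σ (Fin.castLE hkn' ⟨1, h1k⟩)) * (d + 0) - (C + 2 * p m * 0 + 0 ^ 2))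
        = (2 * p (σ (Fin.castLE hkn' ⟨1, h1k⟩)) * (d + -u1) - (C + 2 * p m * -u1 + (-u1) ^ 2))
          * (2 * p (σ (Fin.castLE hkn' ⟨0, h0k⟩)) * (d + 0) - (C + 2 * p m * 0 + 0 ^ 2)) := by
      rw [e5, e6, e3, e4]; ring
    have h3 : (p (σ (Fin.castLE hkn' ⟨0, h0k⟩)) - p (σ (Fin.castLE hkn' ⟨1, h1k⟩)))
        * d * u1 ^ 2 = 0 := by
      linear_combination (1/4 : ℝ) * cross1 + (1/4 : ℝ) * cross2
    have hd0' : d ≠ 0 := hd0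
    have hu1ne : u1 ≠ 0 := ne_of_gt hu1pos
    have h4 : p (σ (Fin.castLE hkn' ⟨0, h0k⟩)) - p (σ (Fin.castLE hkn' ⟨1, h1k⟩)) = 0 := by
      rcases mul_eq_zero.mp h3 with h4 | h4
      · rcases mul_eq_zero.mp h4 with h5 | h5
        · exact h5
        · exact absurd h5 hd0'
      · exact absurd (pow_eq_zero_iff (by norm_num) |>.mp h4) hu1ne
    rw [hi, hj]
    linarith
  -- final contradiction
  obtain ⟨p, hp⟩ := hUconn.nonempty
  have hcont : Continuous (fun t : ℝ => Function.update p i (p i + t)) := by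
    apply Continuous.update
    · exact continuous_const
    · exact continuous_const.add continuous_id
  have hopen : IsOpen ((fun t : ℝ => Function.update p i (p i + t)) ⁻¹' U) :=
    hUopen.preimage hcont
  have h0 : (0 : ℝ) ∈ (fun t : ℝ => Function.update p i (p i + t)) ⁻¹' U := by
    simpa [Function.update_eq_self] using hp
  obtain ⟨ε, hε, hball⟩ := Metric.isOpen_iff.mp hopen 0 h0
  have hq : Function.update p i (p i + ε / 2) ∈ U := by
    apply hball
    rw [Metric.mem_ball, Real.dist_eq, sub_zero, abs_of_pos (by linarith : (0:ℝ) < ε / 2)]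
    linarith
  have h1 := key _ hq
  have h2 := key p hp
  rw [Function.update_self, Function.update_of_ne (Ne.symm hij)] at h1
  linarith
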